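/- a₂ = ∫_1^2 (ln x)²/(x−1) dx = ζ(3)/4. -/

import Mathlib

open MeasureTheory Real Set

lemma sum_int {s : Set ℝ} (hs : MeasurableSet s) (f : ℕ → ℝ → ℝ) (G : ℝ → ℝ) (a : ℕ → ℝ)
    (hGc : AEStronglyMeasurable G (volume.restrict s))
    (hfm : ∀ n, AEMeasurable (f n) (volume.restrict s))
    (hf0 : ∀ n, ∀ x ∈ s, 0 ≤ f n x)
    (hGf : ∀ x ∈ s, HasSum (fun n => f n x) (G x))
    (hfi : ∀ n, IntegrableOn (f n) s)
    (hfv : ∀ n, ∫ x in s, f n x = a n)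
    (ha : Summable a) :
    IntegrableOn G s ∧ ∫ x in s, G x = ∑' n, a n := by
  have ha0 : ∀ n, 0 ≤ a n := by
    intro n; rw [← hfv n]; exact setIntegral_nonneg hs (hf0 n)
  have key : ∀ n, ∫⁻ x in s, ENNReal.ofReal (f n x) = ENNReal.ofReal (a n) := by
    intro n
    rw [← hfv n, ← ofReal_integral_eq_lintegral_ofReal (hfi n)]
    exact (ae_restrict_iff' hs).2 (Filter.Eventually.of_forall (hf0 n))
  have hG0 : ∀ x ∈ s, 0 ≤ G x := fun x hx => (hGf x hx).nonneg (hf0 · x hx)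
  have hG0' : 0 ≤ᶠ[ae (volume.restrict s)] G :=
    (ae_restrict_iff' hs).2 (Filter.Eventually.of_forall hG0)
  have hlin : ∫⁻ x in s, ENNReal.ofReal (G x) = ENNReal.ofReal (∑' n, a n) := by
    have h1 : ∫⁻ x in s, ENNReal.ofReal (G x) = ∫⁻ x in s, ∑' n, ENNReal.ofReal (f n x) := by
      refine setLIntegral_congr_fun hs (fun x hx => ?_)
      rw [← (hGf x hx).tsum_eq, ENNReal.ofReal_tsum_of_nonneg (hf0 · x hx) (hGf x hx).summable]
    rw [h1, lintegral_tsum (f := fun n x => ENNReal.ofReal (f n x)) (fun n => (ENNReal.measurable_ofReal.comp_aemeasurable (hfm n) : AEMeasurable (fun x => ENNReal.ofReal (f n x)) _))]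
    simp_rw [key]
    rw [ENNReal.ofReal_tsum_of_nonneg ha0 ha]
  have hint : IntegrableOn G s := by
    refine ⟨hGc, (hasFiniteIntegral_iff_ofReal hG0').2 ?_⟩
    rw [hlin]; exact ENNReal.ofReal_lt_top
  refine ⟨hint, ?_⟩
  rw [integral_eq_lintegral_of_nonneg_ae hG0' hGc, hlin,
    ENNReal.toReal_ofReal (tsum_nonneg ha0)]


lemma exp_neg_image : (fun u : ℝ => Real.exp (-u)) '' (Ioi 0) = Ioo (0:ℝ) 1 := by
  ext x
  constructor
  · rintro ⟨u, hu, rfl⟩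
    exact ⟨exp_pos _, exp_lt_one_iff.2 (by simpa using (mem_Ioi.1 hu))⟩
  · rintro ⟨hx0, hx1⟩
    exact ⟨-Real.log x, by simpa using Real.log_neg hx0 hx1, by simp [Real.exp_log hx0]⟩

lemma exp_neg_deriv : ∀ u ∈ Ioi (0:ℝ), HasDerivWithinAt (fun u : ℝ => Real.exp (-u))
    (-Real.exp (-u)) (Ioi 0) u := by
  intro u _
  simpa [mul_comm, Function.comp_def] using ((Real.hasDerivAt_exp (-u)).comp u (hasDerivAt_neg u)).hasDerivWithinAt

lemma exp_neg_inj : InjOn (fun u : ℝ => Real.exp (-u)) (Ioi 0) := fun a _ b _ h => by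
  simpa using Real.exp_injective h

lemma subst_exp (g : ℝ → ℝ) :
    (∫ x in Ioo (0:ℝ) 1, g x = ∫ u in Ioi (0:ℝ), Real.exp (-u) * g (Real.exp (-u)))
    ∧ (IntegrableOn g (Ioo (0:ℝ) 1) ↔
        IntegrableOn (fun u => Real.exp (-u) * g (Real.exp (-u))) (Ioi (0:ℝ))) := by
  have h1 := integral_image_eq_integral_abs_deriv_smul measurableSet_Ioi exp_neg_deriv exp_neg_inj g
  have h2 := integrableOn_image_iff_integrableOn_abs_deriv_smul measurableSet_Ioi exp_neg_deriv exp_neg_inj g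
  rw [exp_neg_image] at h1 h2
  simp only [abs_neg, abs_exp, smul_eq_mul] at h1 h2
  exact ⟨h1, h2⟩

lemma A_core (n : ℕ) :
    IntegrableOn (fun t : ℝ => t ^ n * Real.log t ^ 2) (Ioo 0 1) ∧
    ∫ t in Ioo (0:ℝ) 1, t ^ n * Real.log t ^ 2 = 2 / ((n:ℝ) + 1) ^ 3 := by
  obtain ⟨hval, hint⟩ := subst_exp (fun t => t ^ n * Real.log t ^ 2)
  have hc : (0:ℝ) < (n:ℝ) + 1 := by positivity
  have heq : ∀ u ∈ Ioi (0:ℝ), Real.exp (-u) * (Real.exp (-u) ^ n * Real.log (Real.exp (-u)) ^ 2)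
      = u ^ 2 * Real.exp (-(((n:ℝ)+1) * u)) := by
    intro u _
    rw [Real.log_exp, ← Real.exp_nat_mul,
      show (-(((n:ℝ)+1) * u)) = -u + (n:ℝ) * -u by ring, Real.exp_add]
    ring
  have hval2 : ∫ u in Ioi (0:ℝ), u ^ 2 * Real.exp (-(((n:ℝ)+1) * u))
      = 2 / ((n:ℝ) + 1) ^ 3 := by
    have h := Real.integral_rpow_mul_exp_neg_mul_Ioi (a := 3) (r := (n:ℝ)+1) (by norm_num) hc
    simp_rw [show (3:ℝ)-1 = ((2:ℕ):ℝ) by norm_num, Real.rpow_natCast] at h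
    rw [h, show (3:ℝ) = ((3:ℕ):ℝ) by norm_num, Real.rpow_natCast]
    simp only [Nat.cast_ofNat]
    rw [show Real.Gamma 3 = 2 by
        rw [(by norm_num : (3:ℝ) = (2:ℕ) + 1), Real.Gamma_nat_eq_factorial]; norm_num]
    field_simp
  constructor
  · rw [hint]
    refine (IntegrableOn.congr_fun ?_ (fun u hu => (heq u hu).symm) measurableSet_Ioi)
    have h := integrableOn_rpow_mul_exp_neg_mul_rpow (p := 1) (s := 2) (b := (n:ℝ)+1)
      (by norm_num) (by norm_num) hc
    simp_rw [Real.rpow_one, show ((2:ℝ):ℝ) = ((2:ℕ):ℝ) by norm_num, Real.rpow_natCast, neg_mul] at h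
    exact h.congr_fun (fun x _ => by ring_nf) measurableSet_Ioi
  · rw [hval, setIntegral_congr_fun measurableSet_Ioi heq, hval2]


lemma Zsummable : Summable (fun k : ℕ => (1:ℝ)/((k:ℝ)+1)^3) := by
  have h : Summable (fun n : ℕ => (1:ℝ)/(n:ℝ)^3) := Real.summable_one_div_nat_pow.mpr (by norm_num)
  have h2 := (summable_nat_add_iff 1).mpr h
  refine h2.congr fun n => ?_
  push_cast
  ring

lemma Zsummable2 (c : ℝ) : Summable (fun k : ℕ => c/((k:ℝ)+1)^3) := by
  refine (Zsummable.mul_left c).congr fun n => ?_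
  rw [mul_one_div]

lemma tsum_shift (c : ℝ) : ∑' k : ℕ, c/((k:ℝ)+1)^3 = c * ∑' k : ℕ, (1:ℝ)/((k:ℝ)+1)^3 := by
  rw [← tsum_mul_left]
  exact tsum_congr fun n => (mul_one_div c _).symm

lemma log_sq_continuousOn : ContinuousOn (fun x : ℝ => Real.log x ^ 2) (Ioo 0 1) :=
  (Real.continuousOn_log.mono (fun x hx => ne_of_gt hx.1)).pow 2

lemma B_core : IntegrableOn (fun x : ℝ => Real.log x ^ 2 / (1 - x)) (Ioo 0 1) ∧
    ∫ x in Ioo (0:ℝ) 1, Real.log x ^ 2 / (1 - x)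
      = 2 * ∑' k : ℕ, (1:ℝ)/((k:ℝ)+1)^3 := by
  have hGc : AEStronglyMeasurable (fun x : ℝ => Real.log x ^ 2 / (1 - x))
      (volume.restrict (Ioo 0 1)) := by
    refine (log_sq_continuousOn.div (continuousOn_const.sub continuousOn_id) fun x hx => ?_).aestronglyMeasurable
      measurableSet_Ioo
    have := hx.2; simp only [Pi.sub_apply, id] at *; intro h; nlinarith
  have hfm : ∀ n : ℕ, AEMeasurable (fun x : ℝ => x ^ n * Real.log x ^ 2)
      (volume.restrict (Ioo 0 1)) :=
    fun n => ((continuousOn_pow n).mul log_sq_continuousOn).aemeasurable measurableSet_Ioo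
  have hf0 : ∀ n : ℕ, ∀ x ∈ Ioo (0:ℝ) 1, 0 ≤ x ^ n * Real.log x ^ 2 :=
    fun n x hx => mul_nonneg (pow_nonneg hx.1.le n) (sq_nonneg _)
  have hGf : ∀ x ∈ Ioo (0:ℝ) 1, HasSum (fun n : ℕ => x ^ n * Real.log x ^ 2)
      (Real.log x ^ 2 / (1 - x)) := by
    intro x hx
    have h := (hasSum_geometric_of_lt_one hx.1.le hx.2).mul_left (Real.log x ^ 2)
    rw [← div_eq_mul_inv] at h
    simpa [mul_comm] using h
  have key := sum_int measurableSet_Ioo _ _ _ hGc hfm hf0 hGf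
    (fun n => (A_core n).1) (fun n => (A_core n).2) (Zsummable2 2)
  exact ⟨key.1, key.2.trans (tsum_shift 2)⟩

lemma Osummable : Summable (fun n : ℕ => (1:ℝ)/(2*(n:ℝ)+1)^3) := by
  refine Summable.of_nonneg_of_le (fun n => by positivity) (fun n => ?_) Zsummable
  apply one_div_le_one_div_of_le (by positivity)
  have : (n:ℝ) + 1 ≤ 2*(n:ℝ)+1 := by nlinarith [Nat.cast_nonneg (α := ℝ) n]
  gcongr

lemma odd_tsum : ∑' n : ℕ, (1:ℝ)/(2*(n:ℝ)+1)^3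
    = 7/8 * ∑' k : ℕ, (1:ℝ)/((k:ℝ)+1)^3 := by
  have h1 : Summable (fun k : ℕ => (1:ℝ)/(((2*k:ℕ):ℝ)+1)^3) :=
    Osummable.congr fun n => by push_cast; ring
  have h2 : Summable (fun k : ℕ => (1:ℝ)/(((2*k+1:ℕ):ℝ)+1)^3) :=
    (Zsummable2 (1/8)).congr fun n => by push_cast; field_simp; ring
  have key := tsum_even_add_odd (f := fun k : ℕ => (1:ℝ)/((k:ℝ)+1)^3)
    (by exact_mod_cast h1) (by exact_mod_cast h2)
  have e2 : ∑' k : ℕ, (1:ℝ)/(2*(k:ℝ)+1+1)^3 = 1/8 * ∑' k : ℕ, (1:ℝ)/((k:ℝ)+1)^3 := by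
    rw [← tsum_shift (1/8)]
    exact tsum_congr fun n => by field_simp; ring
  push_cast at key
  rw [e2] at key
  linarith

lemma C_core : IntegrableOn (fun x : ℝ => Real.log x ^ 2 / (1 - x^2)) (Ioo 0 1) ∧
    ∫ x in Ioo (0:ℝ) 1, Real.log x ^ 2 / (1 - x^2)
      = 7/4 * ∑' k : ℕ, (1:ℝ)/((k:ℝ)+1)^3 := by
  have hGc : AEStronglyMeasurable (fun x : ℝ => Real.log x ^ 2 / (1 - x^2))
      (volume.restrict (Ioo 0 1)) := by
    refine (log_sq_continuousOn.div (continuousOn_const.sub (continuousOn_pow 2))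
      fun x hx => ?_).aestronglyMeasurable measurableSet_Ioo
    intro h; simp only [Pi.sub_apply] at h; nlinarith [hx.1, hx.2]
  have hfm : ∀ n : ℕ, AEMeasurable (fun x : ℝ => x ^ (2*n) * Real.log x ^ 2)
      (volume.restrict (Ioo 0 1)) :=
    fun n => ((continuousOn_pow (2*n)).mul log_sq_continuousOn).aemeasurable measurableSet_Ioo
  have hf0 : ∀ n : ℕ, ∀ x ∈ Ioo (0:ℝ) 1, 0 ≤ x ^ (2*n) * Real.log x ^ 2 :=
    fun n x hx => mul_nonneg (pow_nonneg hx.1.le _) (sq_nonneg _)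
  have hGf : ∀ x ∈ Ioo (0:ℝ) 1, HasSum (fun n : ℕ => x ^ (2*n) * Real.log x ^ 2)
      (Real.log x ^ 2 / (1 - x^2)) := by
    intro x hx
    have hx2 : x^2 < 1 := by nlinarith [hx.1, hx.2]
    have h := (hasSum_geometric_of_lt_one (sq_nonneg x) hx2).mul_left (Real.log x ^ 2)
    rw [← div_eq_mul_inv] at h
    simpa [← pow_mul, mul_comm] using h
  have ha : Summable (fun n : ℕ => 2/(((2*n:ℕ):ℝ)+1)^3) :=
    (Osummable.mul_left 2).congr fun n => by push_cast; rw [mul_one_div]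
  have key := sum_int measurableSet_Ioo _ _ _ hGc hfm hf0 hGf
    (fun n => (A_core (2*n)).1) (fun n => (A_core (2*n)).2) ha
  refine ⟨key.1, key.2.trans ?_⟩
  have e : ∑' n : ℕ, 2/(((2*n:ℕ):ℝ)+1)^3 = 2 * ∑' n : ℕ, (1:ℝ)/(2*(n:ℝ)+1)^3 := by
    rw [← tsum_mul_left]
    exact tsum_congr fun n => by push_cast; rw [mul_one_div]
  rw [e, odd_tsum]
  ring


lemma subst_gen {f f' : ℝ → ℝ} (hd : ∀ x ∈ Ioo (0:ℝ) 1, HasDerivWithinAt f (f' x) (Ioo 0 1) x)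
    (hinj : InjOn f (Ioo 0 1)) (himg : f '' Ioo 0 1 = Ioo (0:ℝ) 1) (g : ℝ → ℝ) :
    (∫ x in Ioo (0:ℝ) 1, g x = ∫ x in Ioo (0:ℝ) 1, |f' x| * g (f x)) ∧
    (IntegrableOn g (Ioo (0:ℝ) 1) ↔
      IntegrableOn (fun x => |f' x| * g (f x)) (Ioo (0:ℝ) 1)) := by
  have h1 := integral_image_eq_integral_abs_deriv_smul measurableSet_Ioo hd hinj g
  have h2 := integrableOn_image_iff_integrableOn_abs_deriv_smul measurableSet_Ioo hd hinj g
  rw [himg] at h1 h2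
  simp only [smul_eq_mul] at h1 h2
  exact ⟨h1, h2⟩

-- substitution x ↦ 1 - x
lemma sub1 (g : ℝ → ℝ) :
    (∫ x in Ioo (0:ℝ) 1, g x = ∫ x in Ioo (0:ℝ) 1, g (1-x)) ∧
    (IntegrableOn g (Ioo (0:ℝ) 1) ↔ IntegrableOn (fun x => g (1-x)) (Ioo (0:ℝ) 1)) := by
  have hd : ∀ x ∈ Ioo (0:ℝ) 1, HasDerivWithinAt (fun x : ℝ => 1 - x) (-1) (Ioo 0 1) x :=
    fun x _ => by
      simpa using ((hasDerivAt_id' x).const_sub (1:ℝ)).hasDerivWithinAt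
  have hinj : InjOn (fun x : ℝ => 1 - x) (Ioo 0 1) := fun a _ b _ h => by
    simp only at h; linarith
  have himg : (fun x : ℝ => 1 - x) '' Ioo 0 1 = Ioo (0:ℝ) 1 := by
    ext y
    simp only [mem_image, mem_Ioo]
    constructor
    · rintro ⟨x, hx, rfl⟩; exact ⟨by linarith [hx.2], by linarith [hx.1]⟩
    · rintro ⟨h0, h1⟩; exact ⟨1 - y, ⟨by linarith, by linarith⟩, by ring⟩
  have h := subst_gen hd hinj himg g
  simpa using h

-- substitution x ↦ x^2
lemma sub2 (g : ℝ → ℝ) :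
    (∫ x in Ioo (0:ℝ) 1, g x = ∫ x in Ioo (0:ℝ) 1, |2*x| * g (x^2)) ∧
    (IntegrableOn g (Ioo (0:ℝ) 1) ↔
      IntegrableOn (fun x => |2*x| * g (x^2)) (Ioo (0:ℝ) 1)) := by
  have hd : ∀ x ∈ Ioo (0:ℝ) 1, HasDerivWithinAt (fun x : ℝ => x^2) (2*x) (Ioo 0 1) x :=
    fun x _ => by
      have := (hasDerivAt_pow 2 x).hasDerivWithinAt (s := Ioo 0 1)
      simpa [mul_comm] using this
  have hinj : InjOn (fun x : ℝ => x^2) (Ioo 0 1) := fun a ha b hb h => by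
    simp only at h; nlinarith [ha.1, hb.1]
  have himg : (fun x : ℝ => x^2) '' Ioo 0 1 = Ioo (0:ℝ) 1 := by
    ext y
    simp only [mem_image, mem_Ioo]
    constructor
    · rintro ⟨x, hx, rfl⟩; exact ⟨by nlinarith [hx.1], by nlinarith [hx.1, hx.2]⟩
    · rintro ⟨h0, h1⟩
      refine ⟨Real.sqrt y, ⟨Real.sqrt_pos.2 h0, ?_⟩, Real.sq_sqrt h0.le⟩
      nlinarith [Real.sq_sqrt h0.le, Real.sqrt_nonneg y, h1]
  exact subst_gen hd hinj himg g

-- substitution x ↦ (1-x)/(1+x)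
lemma sub3 (g : ℝ → ℝ) :
    (∫ x in Ioo (0:ℝ) 1, g x
      = ∫ x in Ioo (0:ℝ) 1, |(-2)/(1+x)^2| * g ((1-x)/(1+x))) ∧
    (IntegrableOn g (Ioo (0:ℝ) 1) ↔
      IntegrableOn (fun x => |(-2)/(1+x)^2| * g ((1-x)/(1+x))) (Ioo (0:ℝ) 1)) := by
  have hd : ∀ x ∈ Ioo (0:ℝ) 1, HasDerivWithinAt (fun x : ℝ => (1-x)/(1+x))
      ((-2)/(1+x)^2) (Ioo 0 1) x := by
    intro x hx
    have hne : 1 + x ≠ 0 := by intro h; nlinarith [hx.1]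
    have h : HasDerivAt (fun x : ℝ => (1-x)/(1+x))
        (((-1) * (1 + x) - (1 - x) * 1)/(1+x)^2) x := by
      have h1 : HasDerivAt (fun x : ℝ => 1 - x) (-1) x := by
        simpa using (hasDerivAt_id' x).const_sub (1:ℝ)
      have h2 : HasDerivAt (fun x : ℝ => 1 + x) 1 x := by
        simpa using (hasDerivAt_id' x).const_add (1:ℝ)
      exact h1.div h2 hne
    have h' := h.hasDerivWithinAt (s := Ioo 0 1)
    rw [show (-2:ℝ)/(1+x)^2 = ((-1) * (1 + x) - (1 - x) * 1)/(1+x)^2 by ring]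
    exact h'
  have hinj : InjOn (fun x : ℝ => (1-x)/(1+x)) (Ioo 0 1) := by
    intro a ha b hb h
    simp only at h
    have h1 : 1 + a ≠ 0 := by intro h'; nlinarith [ha.1]
    have h2 : 1 + b ≠ 0 := by intro h'; nlinarith [hb.1]
    field_simp at h
    nlinarith
  have himg : (fun x : ℝ => (1-x)/(1+x)) '' Ioo 0 1 = Ioo (0:ℝ) 1 := by
    ext y
    simp only [mem_image, mem_Ioo]
    constructor
    · rintro ⟨x, hx, rfl⟩
      have h1 : (0:ℝ) < 1 + x := by linarith [hx.1]
      have h2 : (0:ℝ) < 1 - x := by linarith [hx.2]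
      constructor
      · positivity
      · rw [div_lt_one h1]; linarith [hx.1]
    · rintro ⟨h0, h1⟩
      have h2 : (0:ℝ) < 1 + y := by linarith
      have h3 : (0:ℝ) < 1 - y := by linarith
      refine ⟨(1-y)/(1+y), ⟨by positivity, by rw [div_lt_one h2]; linarith⟩, ?_⟩
      field_simp
      ring
  exact subst_gen hd hinj himg g


noncomputable def Z : ℝ := ∑' k : ℕ, (1:ℝ)/((k:ℝ)+1)^3

lemma D1 : IntegrableOn (fun x : ℝ => Real.log (1-x) ^ 2 / x) (Ioo 0 1) ∧
    ∫ x in Ioo (0:ℝ) 1, Real.log (1-x) ^ 2 / x = 2 * Z := by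
  obtain ⟨hv, hi⟩ := sub1 (fun v => Real.log v ^ 2 / (1 - v))
  have he : (fun x : ℝ => Real.log (1-x) ^ 2 / (1 - (1-x)))
      = fun x : ℝ => Real.log (1-x) ^ 2 / x := by
    funext x; ring_nf
  rw [he] at hv hi
  exact ⟨hi.1 B_core.1, hv ▸ B_core.2⟩

lemma D2 : IntegrableOn (fun x : ℝ => Real.log (1-x^2) ^ 2 / x) (Ioo 0 1) ∧
    ∫ x in Ioo (0:ℝ) 1, Real.log (1-x^2) ^ 2 / x = Z := by
  obtain ⟨hv, hi⟩ := sub2 (fun v => Real.log (1-v) ^ 2 / v)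
  have he : ∀ x ∈ Ioo (0:ℝ) 1, |2*x| * (Real.log (1-x^2) ^ 2 / x^2)
      = 2 * (Real.log (1-x^2) ^ 2 / x) := by
    intro x hx
    have h0 : x ≠ 0 := ne_of_gt hx.1
    rw [abs_of_pos (by linarith [hx.1] : (0:ℝ) < 2*x)]
    field_simp
  have hint : IntegrableOn (fun x : ℝ => 2 * (Real.log (1-x^2) ^ 2 / x)) (Ioo 0 1) :=
    (hi.1 D1.1).congr_fun he measurableSet_Ioo
  have hval : ∫ x in Ioo (0:ℝ) 1, 2 * (Real.log (1-x^2) ^ 2 / x) = 2 * Z := by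
    rw [← setIntegral_congr_fun measurableSet_Ioo he, ← hv]
    exact D1.2
  rw [integral_const_mul] at hval
  constructor
  · have := hint.const_mul (1/2 : ℝ)
    exact IntegrableOn.congr_fun this (fun x _ => by ring) measurableSet_Ioo
  · linarith
lemma D3 : IntegrableOn (fun x : ℝ => Real.log ((1-x)/(1+x)) ^ 2 / x) (Ioo 0 1) ∧
    ∫ x in Ioo (0:ℝ) 1, Real.log ((1-x)/(1+x)) ^ 2 / x = 7/2 * Z := by
  obtain ⟨hv, hi⟩ := sub3 (fun t => Real.log t ^ 2 / (1 - t^2))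
  have he : ∀ x ∈ Ioo (0:ℝ) 1, |(-2)/(1+x)^2| *
      (Real.log ((1-x)/(1+x)) ^ 2 / (1 - ((1-x)/(1+x))^2))
      = (1/2) * (Real.log ((1-x)/(1+x)) ^ 2 / x) := by
    intro x hx
    have h1 : (0:ℝ) < 1 + x := by linarith [hx.1]
    have h0 : x ≠ 0 := ne_of_gt hx.1
    have hq : 1 - ((1-x)/(1+x))^2 = 4*x/(1+x)^2 := by
      field_simp
      ring
    rw [hq, abs_div, abs_neg, abs_of_pos (by positivity : (0:ℝ) < (1+x)^2)]
    rw [show |(2:ℝ)| = 2 by norm_num]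
    field_simp
    ring
  have hint : IntegrableOn (fun x : ℝ => (1/2) * (Real.log ((1-x)/(1+x)) ^ 2 / x)) (Ioo 0 1) :=
    (hi.1 C_core.1).congr_fun he measurableSet_Ioo
  have hval : ∫ x in Ioo (0:ℝ) 1, (1/2) * (Real.log ((1-x)/(1+x)) ^ 2 / x) = 7/4 * Z := by
    rw [← setIntegral_congr_fun measurableSet_Ioo he, ← hv]
    exact C_core.2
  rw [integral_const_mul] at hval
  constructor
  · have := hint.const_mul (2 : ℝ)
    exact IntegrableOn.congr_fun this (fun x _ => by ring) measurableSet_Ioo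
  · linarith

lemma Ival : ∫ x in Ioo (0:ℝ) 1, Real.log (x+1) ^ 2 / x = Z / 4 := by
  have hpt : ∀ x ∈ Ioo (0:ℝ) 1, Real.log (x+1) ^ 2 / x
      = 1/2 * (Real.log (1-x^2) ^ 2 / x) + 1/2 * (Real.log ((1-x)/(1+x)) ^ 2 / x)
        - Real.log (1-x) ^ 2 / x := by
    intro x hx
    have h1 : (0:ℝ) < 1 - x := by linarith [hx.2]
    have h2 : (0:ℝ) < 1 + x := by linarith [hx.1]
    have h0 : x ≠ 0 := ne_of_gt hx.1
    rw [show x + 1 = 1 + x by ring,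
      show (1:ℝ) - x^2 = (1-x)*(1+x) by ring,
      Real.log_mul h1.ne' h2.ne', Real.log_div h1.ne' h2.ne']
    field_simp
    ring
  rw [setIntegral_congr_fun measurableSet_Ioo hpt]
  have i1 := D2.1.const_mul (1/2 : ℝ)
  have i2 := D3.1.const_mul (1/2 : ℝ)
  have hsub := integral_sub (i1.add i2) D1.1
  simp only [Pi.add_apply] at hsub
  rw [hsub, integral_add i1 i2, integral_const_mul, integral_const_mul, D1.2, D2.2, D3.2]
  ring

theorem nielsen_ramanujan_two :
    ∫ x in Set.Ioo (1 : ℝ) 2, (Real.log x) ^ 2 / (x - 1)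
      = (∑' k : ℕ, (1 : ℝ) / (k + 1) ^ 3) / 4 := by
  have hd : ∀ t ∈ Ioo (0:ℝ) 1, HasDerivWithinAt (fun t : ℝ => t + 1) 1 (Ioo 0 1) t :=
    fun t _ => ((hasDerivAt_id t).add_const 1).hasDerivWithinAt
  have hinj : InjOn (fun t : ℝ => t + 1) (Ioo 0 1) := fun a _ b _ h => by
    simpa using h
  have himg : (fun t : ℝ => t + 1) '' Ioo 0 1 = Ioo (1:ℝ) 2 := by
    ext y
    simp only [mem_image, mem_Ioo]
    constructor
    · rintro ⟨x, hx, rfl⟩; exact ⟨by linarith [hx.1], by linarith [hx.2]⟩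
    · rintro ⟨h0, h1⟩; exact ⟨y - 1, ⟨by linarith, by linarith⟩, by ring⟩
  have h := integral_image_eq_integral_abs_deriv_smul measurableSet_Ioo hd hinj
    (fun x => (Real.log x) ^ 2 / (x - 1))
  rw [himg] at h
  simp only [abs_one, one_smul, add_sub_cancel_right] at h
  rw [h, Ival]
  rfl
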